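/- Let η > 0, g ∈ W^{2,∞}(ℝ), s₀ ∈ W^{2,∞}(ℝ), x₀ ∈ ℝ, and M₂ > 0. Suppose (s₁, x_{c,1}) and (s₂, x_{c,2}) are two pairs, with each s_i continuous with sup_{t≥0} ‖s_i(t,·)‖_{W^{2,∞}} ≤ M₂ and each x_{c,i} continuous, satisfying for all t ≥ 0 and x ∈ ℝ: x_{c,i}(t) = x₀ − η ∫_0^t ∂_x s_i(τ, x_{c,i}(τ)) dτ and s_i(t,x) = e^{−t}(h_t ∗ s₀)(x) + ∫_0^t e^{−(t−τ)} (h_{t−τ} ∗ g)(x − x_{c,i}(τ)) dτ. Then s₁ = s₂ and x_{c,1} = x_{c,2}. -/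

import Mathlib

open MeasureTheory Real
open Set Metric Filter Topology

noncomputable section

/-- The heat kernel `h_t(x) = (4πt)^{-1/2} e^{-x²/(4t)}` (for `t > 0`). -/
def heatKernel (t x : ℝ) : ℝ := (Real.sqrt (4 * Real.pi * t))⁻¹ * Real.exp (-x ^ 2 / (4 * t))

/-- Spatial convolution with the heat kernel: `(h_t ∗ f)(x)`. -/
def heatConv (t : ℝ) (f : ℝ → ℝ) (x : ℝ) : ℝ := ∫ y : ℝ, heatKernel t (x - y) * f y

/-- Membership in `W^{k,∞}(ℝ)` (for the classical functions appearing here):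
`C^k` with all derivatives up to order `k` bounded. -/
def MemW (k : ℕ) (f : ℝ → ℝ) : Prop :=
  ContDiff ℝ k f ∧ ∀ j ≤ k, ∃ C, ∀ x, |iteratedDeriv j f x| ≤ C

/-- The `W^{k,∞}` norm: the sum of the sup norms of the derivatives up to order `k`. -/
def WNorm (k : ℕ) (f : ℝ → ℝ) : ℝ :=
  ∑ j ∈ Finset.range (k + 1), ⨆ x : ℝ, |iteratedDeriv j f x|


lemma heatKernel_nonneg (t x : ℝ) : 0 ≤ heatKernel t x :=
  mul_nonneg (inv_nonneg.2 (Real.sqrt_nonneg _)) (Real.exp_pos _).le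

lemma heatKernel_eq {t : ℝ} (x : ℝ) :
    heatKernel t x = (Real.sqrt (4 * Real.pi * t))⁻¹ * Real.exp (-((4*t)⁻¹) * x ^ 2) := by
  rw [heatKernel, neg_div, div_eq_inv_mul, neg_mul]

lemma heatKernel_continuous (t : ℝ) : Continuous (heatKernel t) := by
  unfold heatKernel
  exact continuous_const.mul (((continuous_pow 2).neg.div_const _).rexp)

lemma heatKernel_integrable {t : ℝ} (ht : 0 < t) : Integrable (heatKernel t) := by
  have hb : (0:ℝ) < (4*t)⁻¹ := by positivity
  have : Integrable (fun x : ℝ => (Real.sqrt (4 * Real.pi * t))⁻¹ * Real.exp (-((4*t)⁻¹) * x ^ 2)) :=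
    (integrable_exp_neg_mul_sq hb).const_mul _
  exact this.congr (ae_of_all _ fun x => (heatKernel_eq x).symm)

lemma heatKernel_integral {t : ℝ} (ht : 0 < t) : ∫ x : ℝ, heatKernel t x = 1 := by
  have hb : (0:ℝ) < (4*t)⁻¹ := by positivity
  have h1 : ∫ x : ℝ, heatKernel t x
      = (Real.sqrt (4 * Real.pi * t))⁻¹ * ∫ x : ℝ, Real.exp (-((4*t)⁻¹) * x ^ 2) := by
    rw [← integral_const_mul]
    exact integral_congr_ae (ae_of_all _ fun x => heatKernel_eq x)
  rw [h1, integral_gaussian]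
  have h2 : Real.pi / (4*t)⁻¹ = 4 * Real.pi * t := by
    field_simp
  rw [h2]
  have : Real.sqrt (4 * Real.pi * t) ≠ 0 := by
    refine ne_of_gt (Real.sqrt_pos.2 (by positivity))
  field_simp

lemma heatConv_eq (t : ℝ) (f : ℝ → ℝ) (x : ℝ) :
    heatConv t f x = ∫ y : ℝ, heatKernel t y * f (x - y) := by
  rw [heatConv, ← integral_sub_left_eq_self (fun y => heatKernel t (x - y) * f y) volume x]
  simp

lemma integrand_integrable {t : ℝ} (ht : 0 < t) {f : ℝ → ℝ} (hf : Continuous f)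
    {C : ℝ} (hC : ∀ x, |f x| ≤ C) (x : ℝ) :
    Integrable (fun y => heatKernel t y * f (x - y)) := by
  refine ((heatKernel_integrable ht).const_mul C).mono' ?_ (ae_of_all _ fun y => ?_)
  · exact ((heatKernel_continuous t).mul (hf.comp (continuous_const.sub continuous_id))).aestronglyMeasurable
  · have h0 := heatKernel_nonneg t y
    calc ‖heatKernel t y * f (x - y)‖ = heatKernel t y * |f (x - y)| := by
          rw [Real.norm_eq_abs, abs_mul, abs_of_nonneg h0]
      _ ≤ heatKernel t y * C := mul_le_mul_of_nonneg_left (hC _) h0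
      _ = C * heatKernel t y := mul_comm _ _

lemma heatConv_abs_le {t : ℝ} (ht : 0 < t) {f : ℝ → ℝ} (hf : Continuous f)
    {C : ℝ} (hC : ∀ x, |f x| ≤ C) (x : ℝ) : |heatConv t f x| ≤ C := by
  rw [heatConv_eq]
  calc |∫ y : ℝ, heatKernel t y * f (x - y)| ≤ ∫ y : ℝ, |heatKernel t y * f (x - y)| := by
        simpa only [Real.norm_eq_abs] using
          norm_integral_le_integral_norm (μ := volume) (fun y : ℝ => heatKernel t y * f (x - y))
    _ ≤ ∫ y : ℝ, C * heatKernel t y := by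
        refine integral_mono (integrand_integrable ht hf hC x).abs
          ((heatKernel_integrable ht).const_mul C) fun y => ?_
        have h0 := heatKernel_nonneg t y
        rw [abs_mul, abs_of_nonneg h0]
        calc heatKernel t y * |f (x - y)| ≤ heatKernel t y * C :=
              mul_le_mul_of_nonneg_left (hC _) h0
          _ = C * heatKernel t y := mul_comm _ _
    _ = C := by rw [integral_const_mul, heatKernel_integral ht, mul_one]

lemma heatConv_lip {t : ℝ} (ht : 0 < t) {f : ℝ → ℝ} (hf : Continuous f)
    {C : ℝ} (hC : ∀ x, |f x| ≤ C) {L : ℝ} (hL : ∀ a b, |f a - f b| ≤ L * |a - b|)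
    (x y : ℝ) : |heatConv t f x - heatConv t f y| ≤ L * |x - y| := by
  rw [heatConv_eq, heatConv_eq, ← integral_sub (integrand_integrable ht hf hC x)
      (integrand_integrable ht hf hC y)]
  calc |∫ z : ℝ, (heatKernel t z * f (x - z) - heatKernel t z * f (y - z))|
      ≤ ∫ z : ℝ, |heatKernel t z * f (x - z) - heatKernel t z * f (y - z)| := by
        simpa only [Real.norm_eq_abs] using norm_integral_le_integral_norm (μ := volume)
          (fun z : ℝ => heatKernel t z * f (x - z) - heatKernel t z * f (y - z))
    _ ≤ ∫ z : ℝ, (L * |x - y|) * heatKernel t z := by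
        refine integral_mono ((integrand_integrable ht hf hC x).sub
          (integrand_integrable ht hf hC y)).abs
          ((heatKernel_integrable ht).const_mul _) fun z => ?_
        have h0 := heatKernel_nonneg t z
        rw [← mul_sub, abs_mul, abs_of_nonneg h0]
        calc heatKernel t z * |f (x - z) - f (y - z)| ≤ heatKernel t z * (L * |x - y|) := by
              refine mul_le_mul_of_nonneg_left ?_ h0
              have := hL (x - z) (y - z)
              simpa [sub_sub_sub_cancel_right] using this
          _ = (L * |x - y|) * heatKernel t z := mul_comm _ _
    _ = L * |x - y| := by rw [integral_const_mul, heatKernel_integral ht, mul_one]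

lemma heatConv_hasDerivAt {t : ℝ} (ht : 0 < t) {f f' : ℝ → ℝ} (hf : Continuous f)
    (hf' : Continuous f') (hd : ∀ x, HasDerivAt f (f' x) x)
    {C0 : ℝ} (hC0 : ∀ x, |f x| ≤ C0) {C1 : ℝ} (hC1 : ∀ x, |f' x| ≤ C1) (x₀ : ℝ) :
    HasDerivAt (heatConv t f) (heatConv t f' x₀) x₀ := by
  have key := hasDerivAt_integral_of_dominated_loc_of_deriv_le (μ := volume)
      (F := fun x y => heatKernel t y * f (x - y))
      (F' := fun x y => heatKernel t y * f' (x - y)) (x₀ := x₀) (bound := fun y => C1 * heatKernel t y)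
      Filter.univ_mem
      (Filter.Eventually.of_forall fun x =>
        ((heatKernel_continuous t).mul (hf.comp (continuous_const.sub continuous_id))).aestronglyMeasurable)
      (integrand_integrable ht hf hC0 x₀)
      ((heatKernel_continuous t).mul (hf'.comp (continuous_const.sub continuous_id))).aestronglyMeasurable
      (ae_of_all _ fun y x _ => by
        have h0 := heatKernel_nonneg t y
        rw [Real.norm_eq_abs, abs_mul, abs_of_nonneg h0]
        calc heatKernel t y * |f' (x - y)| ≤ heatKernel t y * C1 :=
              mul_le_mul_of_nonneg_left (hC1 _) h0
          _ = C1 * heatKernel t y := mul_comm _ _)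
      ((heatKernel_integrable ht).const_mul C1)
      (ae_of_all _ fun y x _ => by
        have : HasDerivAt (fun x => f (x - y)) (f' (x - y)) x := by
          simpa [Function.comp_def] using (hd (x - y)).comp x ((hasDerivAt_id x).sub_const y)
        exact this.const_mul (heatKernel t y))
  have h2 := key.2
  have hfun : (fun x => ∫ y : ℝ, heatKernel t y * f (x - y)) = heatConv t f := by
    funext x; rw [heatConv_eq]
  rw [hfun] at h2
  rw [heatConv_eq]
  exact h2

lemma heatConv_continuousAt {f : ℝ → ℝ} (hf : Continuous f) {C : ℝ} (hC : ∀ x, |f x| ≤ C)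
    {σ₀ y₀ : ℝ} (hσ : 0 < σ₀) :
    ContinuousAt (fun p : ℝ × ℝ => heatConv p.1 f p.2) (σ₀, y₀) := by
  have hfun : (fun p : ℝ × ℝ => heatConv p.1 f p.2)
      = fun p : ℝ × ℝ => ∫ z : ℝ, heatKernel p.1 z * f (p.2 - z) := by
    funext p; exact heatConv_eq _ _ _
  rw [hfun]
  have hCnn : 0 ≤ C := le_trans (abs_nonneg _) (hC 0)
  set bound : ℝ → ℝ := fun z => C * ((Real.sqrt (4 * Real.pi * (σ₀/2)))⁻¹
      * Real.exp (-(8*σ₀)⁻¹ * z ^ 2)) with hbound_def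
  have hmemI : ∀ᶠ p : ℝ × ℝ in 𝓝 (σ₀, y₀), p.1 ∈ Ioo (σ₀/2) (2*σ₀) := by
    have : IsOpen ((fun p : ℝ × ℝ => p.1) ⁻¹' Ioo (σ₀/2) (2*σ₀)) :=
      isOpen_Ioo.preimage continuous_fst
    exact this.mem_nhds (show σ₀/2 < (σ₀, y₀).1 ∧ (σ₀, y₀).1 < 2*σ₀ from ⟨by linarith, by linarith⟩)
  refine continuousAt_of_dominated (bound := bound) ?_ ?_ ?_ ?_
  · exact Eventually.of_forall fun p =>
      ((heatKernel_continuous p.1).mul (hf.comp (continuous_const.sub continuous_id))).aestronglyMeasurable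
  · refine hmemI.mono fun p hp => ae_of_all _ fun z => ?_
    obtain ⟨h1, h2⟩ := hp
    have hker : heatKernel p.1 z ≤ (Real.sqrt (4 * Real.pi * (σ₀/2)))⁻¹
        * Real.exp (-(8*σ₀)⁻¹ * z ^ 2) := by
      unfold heatKernel
      have hp1 : (0:ℝ) < p.1 := lt_trans (by positivity) h1
      refine mul_le_mul ?_ ?_ (Real.exp_pos _).le (by positivity)
      · refine inv_anti₀ (Real.sqrt_pos.2 (by positivity)) ?_
        exact Real.sqrt_le_sqrt (by nlinarith [Real.pi_pos])
      · refine Real.exp_le_exp.2 ?_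
        rw [neg_div, neg_mul, neg_le_neg_iff, inv_mul_eq_div]
        refine div_le_div_of_nonneg_left (by positivity) (by positivity) (by linarith)
    calc ‖heatKernel p.1 z * f (p.2 - z)‖ = heatKernel p.1 z * |f (p.2 - z)| := by
          rw [Real.norm_eq_abs, abs_mul, abs_of_nonneg (heatKernel_nonneg _ _)]
      _ ≤ ((Real.sqrt (4 * Real.pi * (σ₀/2)))⁻¹ * Real.exp (-(8*σ₀)⁻¹ * z ^ 2)) * C := by
          exact mul_le_mul hker (hC _) (abs_nonneg _) (by positivity)
      _ = bound z := by rw [hbound_def]; ring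
  · exact ((integrable_exp_neg_mul_sq (by positivity : (0:ℝ) < (8*σ₀)⁻¹)).const_mul _).const_mul C
  · refine ae_of_all _ fun z => ?_
    have h1 : ContinuousAt (fun p : ℝ × ℝ => heatKernel p.1 z) (σ₀, y₀) := by
      have hs : ContinuousAt (fun σ : ℝ => (Real.sqrt (4 * Real.pi * σ))⁻¹) σ₀ := by
        refine ContinuousAt.inv₀ ?_ (ne_of_gt (Real.sqrt_pos.2 (by positivity)))
        exact (Real.continuous_sqrt.comp (continuous_const.mul continuous_id)).continuousAt
      have he : ContinuousAt (fun σ : ℝ => Real.exp (-z ^ 2 / (4 * σ))) σ₀ := by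
        refine Real.continuous_exp.continuousAt.comp ?_
        exact (continuousAt_const.div ((continuous_const.mul continuous_id).continuousAt)
          (by positivity))
      exact (ContinuousAt.comp (x := (σ₀, y₀)) (hs.mul he) continuousAt_fst)
    exact h1.mul ((hf.continuousAt).comp ((continuous_snd.sub continuous_const).continuousAt))

lemma restrict_Ioc_eq_Ioo (a b : ℝ) :
    (volume : Measure ℝ).restrict (Ioc a b) = volume.restrict (Ioo a b) :=
  (Measure.restrict_congr_set Ioo_ae_eq_Ioc).symm

lemma aesm_of_contOn_Ico {t : ℝ} (ht : 0 < t) {F : ℝ → ℝ} (hF : ContinuousOn F (Ico 0 t)) :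
    AEStronglyMeasurable F (volume.restrict (Set.uIoc 0 t)) := by
  rw [Set.uIoc_of_le ht.le, restrict_Ioc_eq_Ioo]
  exact (hF.mono Ioo_subset_Ico_self).aestronglyMeasurable measurableSet_Ioo

lemma integrand_contOn {t : ℝ} (ht : 0 < t) {f : ℝ → ℝ} (hf : Continuous f)
    {C : ℝ} (hC : ∀ x, |f x| ≤ C) {xc : ℝ → ℝ} (hxc : ContinuousOn xc (Ici 0)) (x : ℝ) :
    ContinuousOn (fun τ => Real.exp (-(t - τ)) * heatConv (t - τ) f (x - xc τ)) (Ico 0 t) := by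
  intro τ hτ
  refine ContinuousWithinAt.mul ?_ ?_
  · exact (Real.continuous_exp.comp (continuous_sub_left t).neg).continuousWithinAt
  · have hpair : ContinuousWithinAt (fun τ => ((t - τ, x - xc τ) : ℝ × ℝ)) (Ico 0 t) τ := by
      refine ContinuousWithinAt.prodMk (continuous_sub_left t).continuousWithinAt ?_
      exact continuousWithinAt_const.sub ((hxc τ hτ.1).mono (fun y hy => hy.1))
    have hg := heatConv_continuousAt hf hC (σ₀ := t - τ) (y₀ := x - xc τ)
      (by linarith [hτ.2] : (0:ℝ) < t - τ)
    have hcomp : ContinuousWithinAt ((fun p : ℝ × ℝ => heatConv p.1 f p.2) ∘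
        (fun τ => ((t - τ, x - xc τ) : ℝ × ℝ))) (Ico 0 t) τ :=
      ContinuousAt.comp_continuousWithinAt hg hpair
    exact hcomp

lemma heatKernel_zero (x : ℝ) : heatKernel 0 x = 0 := by
  simp [heatKernel]

lemma heatConv_zero (f : ℝ → ℝ) (x : ℝ) : heatConv 0 f x = 0 := by
  simp [heatConv, heatKernel_zero]

lemma intervalIntegrable_of_bdd {a b : ℝ} {F : ℝ → ℝ}
    (hm : AEStronglyMeasurable F (volume.restrict (Set.uIoc a b)))
    {C : ℝ} (hb : ∀ τ ∈ Set.uIoc a b, |F τ| ≤ C) : IntervalIntegrable F volume a b := by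
  rw [intervalIntegrable_iff]
  haveI : IsFiniteMeasure (volume.restrict (Set.uIoc a b)) := by
    constructor
    rw [Measure.restrict_apply_univ, Set.uIoc]
    exact measure_Ioc_lt_top
  refine Integrable.mono' (integrable_const C) hm ?_
  exact (ae_restrict_iff' measurableSet_uIoc).2 (ae_of_all _ hb)

lemma ae_ne_vol (t : ℝ) : ∀ᵐ τ : ℝ, τ ≠ t := by
  rw [MeasureTheory.ae_iff]
  simpa [Classical.not_not] using (Real.volume_singleton (a := t))

lemma duhamel_hasDerivAt {t : ℝ} (ht : 0 < t) {g g' : ℝ → ℝ} (hgc : Continuous g)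
    (hg'c : Continuous g') (hgd : ∀ x, HasDerivAt g (g' x) x)
    {C0 : ℝ} (hC0 : ∀ x, |g x| ≤ C0) {C1 : ℝ} (hC1 : ∀ x, |g' x| ≤ C1)
    {xc : ℝ → ℝ} (hxc : ContinuousOn xc (Ici 0)) (x₀ : ℝ) :
    HasDerivAt (fun x => ∫ τ in (0:ℝ)..t, Real.exp (-(t - τ)) * heatConv (t - τ) g (x - xc τ))
      (∫ τ in (0:ℝ)..t, Real.exp (-(t - τ)) * heatConv (t - τ) g' (x₀ - xc τ)) x₀ := by
  have hC1nn : 0 ≤ C1 := le_trans (abs_nonneg _) (hC1 0)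
  have key := intervalIntegral.hasDerivAt_integral_of_dominated_loc_of_deriv_le
      (μ := volume) (a := (0:ℝ)) (b := t)
      (F := fun x τ => Real.exp (-(t - τ)) * heatConv (t - τ) g (x - xc τ))
      (F' := fun x τ => Real.exp (-(t - τ)) * heatConv (t - τ) g' (x - xc τ))
      (x₀ := x₀) (bound := fun _ => C1) Filter.univ_mem
      (Eventually.of_forall fun x => aesm_of_contOn_Ico ht (integrand_contOn ht hgc hC0 hxc x))
      ?_ (aesm_of_contOn_Ico ht (integrand_contOn ht hg'c hC1 hxc x₀)) ?_
      intervalIntegrable_const ?_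
  · exact key.2
  · -- IntervalIntegrable (F x₀)
    have hC0nn : 0 ≤ C0 := le_trans (abs_nonneg _) (hC0 0)
    refine intervalIntegrable_of_bdd (aesm_of_contOn_Ico ht (integrand_contOn ht hgc hC0 hxc x₀))
      (C := C0) fun τ hτ => ?_
    rw [Set.uIoc_of_le ht.le] at hτ
    rcases eq_or_lt_of_le hτ.2 with h | h
    · rw [h]; simp [heatConv_zero, hC0nn]
    · have h1 : (0:ℝ) < t - τ := by linarith
      rw [abs_mul, Real.abs_exp]
      calc Real.exp (-(t - τ)) * |heatConv (t - τ) g (x₀ - xc τ)|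
          ≤ 1 * C0 := by
            refine mul_le_mul ?_ (heatConv_abs_le h1 hgc hC0 _) (abs_nonneg _) zero_le_one
            exact Real.exp_le_one_iff.2 (by linarith)
        _ = C0 := one_mul _
  · -- bound on F'
    refine ((ae_ne_vol t).mono fun τ hne hτ x _ => ?_)
    rw [Set.uIoc_of_le ht.le] at hτ
    have h1 : (0:ℝ) < t - τ := lt_of_le_of_ne (by linarith [hτ.2]) (by intro h; exact hne (by linarith))
    rw [Real.norm_eq_abs, abs_mul, Real.abs_exp]
    calc Real.exp (-(t - τ)) * |heatConv (t - τ) g' (x - xc τ)|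
        ≤ 1 * C1 := by
          refine mul_le_mul ?_ (heatConv_abs_le h1 hg'c hC1 _) (abs_nonneg _) zero_le_one
          exact Real.exp_le_one_iff.2 (by linarith [hτ.2])
      _ = C1 := one_mul _
  · -- differentiability
    refine ((ae_ne_vol t).mono fun τ hne hτ x _ => ?_)
    rw [Set.uIoc_of_le ht.le] at hτ
    have h1 : (0:ℝ) < t - τ := lt_of_le_of_ne (by linarith [hτ.2]) (by intro h; exact hne (by linarith))
    have hconv : HasDerivAt (fun x => heatConv (t - τ) g (x - xc τ))
        (heatConv (t - τ) g' (x - xc τ)) x := by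
      have := (heatConv_hasDerivAt h1 hgc hg'c hgd hC0 hC1 (x - xc τ)).comp x
        ((hasDerivAt_id x).sub_const (xc τ))
      simpa [Function.comp_def] using this
    exact hconv.const_mul _

lemma restrict_Ioc_eq_Ioo' (a b : ℝ) :
    (volume : Measure ℝ).restrict (Ioc a b) = volume.restrict (Ioo a b) :=
  (Measure.restrict_congr_set Ioo_ae_eq_Ioc).symm

/-- Measurability in time of the derivative along a moving point, via difference quotients. -/
lemma aesm_deriv_moving {s : ℝ → ℝ → ℝ}
    (hscont : ContinuousOn (fun p : ℝ × ℝ => s p.1 p.2) (Set.Ici 0 ×ˢ Set.univ))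
    (hdiff : ∀ τ ≥ (0:ℝ), Differentiable ℝ (s τ))
    {xc : ℝ → ℝ} (hxc : ContinuousOn xc (Set.Ici 0)) {t : ℝ} (ht : 0 < t) :
    AEStronglyMeasurable (fun τ => deriv (s τ) (xc τ)) (volume.restrict (Set.uIoc 0 t)) := by
  rw [Set.uIoc_of_le ht.le, restrict_Ioc_eq_Ioo']
  set F : ℕ → ℝ → ℝ := fun n τ =>
    (s τ (xc τ + 1 / (n + 1)) - s τ (xc τ)) * (n + 1) with hF
  have hFm : ∀ n : ℕ, AEStronglyMeasurable (F n) (volume.restrict (Ioo 0 t)) := by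
    intro n
    have hc : ContinuousOn (F n) (Ioo 0 t) := by
      have h1 : ContinuousOn (fun τ => s τ (xc τ + 1 / (n + 1))) (Ioo 0 t) := by
        intro τ hτ
        have hpair : ContinuousWithinAt (fun τ => ((τ, xc τ + 1 / (n + 1)) : ℝ × ℝ)) (Ioo 0 t) τ :=
          (continuousWithinAt_id).prodMk (((hxc τ hτ.1.le).mono fun y hy => hy.1.le).add
            continuousWithinAt_const)
        have hmem : (τ, xc τ + 1 / ((n:ℝ) + 1)) ∈ Set.Ici (0:ℝ) ×ˢ Set.univ := ⟨hτ.1.le, trivial⟩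
        have := ContinuousWithinAt.comp (g := fun p : ℝ × ℝ => s p.1 p.2)
          (f := fun τ => ((τ, xc τ + 1 / (n + 1)) : ℝ × ℝ))
          (hscont _ hmem) hpair (fun y hy => ⟨hy.1.le, trivial⟩)
        exact this
      have h2 : ContinuousOn (fun τ => s τ (xc τ)) (Ioo 0 t) := by
        intro τ hτ
        have hpair : ContinuousWithinAt (fun τ => ((τ, xc τ) : ℝ × ℝ)) (Ioo 0 t) τ :=
          (continuousWithinAt_id).prodMk ((hxc τ hτ.1.le).mono fun y hy => hy.1.le)
        have := ContinuousWithinAt.comp (g := fun p : ℝ × ℝ => s p.1 p.2)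
          (f := fun τ => ((τ, xc τ) : ℝ × ℝ))
          (hscont (τ, xc τ) ⟨hτ.1.le, trivial⟩) hpair (fun y hy => ⟨hy.1.le, trivial⟩)
        exact this
      exact (h1.sub h2).mul continuousOn_const
    exact hc.aestronglyMeasurable measurableSet_Ioo
  refine aestronglyMeasurable_of_tendsto_ae atTop hFm ?_
  refine (ae_restrict_iff' measurableSet_Ioo).2 (ae_of_all _ fun τ hτ => ?_)
  have hd : HasDerivAt (s τ) (deriv (s τ) (xc τ)) (xc τ) :=
    ((hdiff τ hτ.1.le) (xc τ)).hasDerivAt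
  have hslope := hasDerivAt_iff_tendsto_slope.1 hd
  have hu : Tendsto (fun n : ℕ => xc τ + 1 / ((n:ℝ) + 1)) atTop (𝓝[≠] (xc τ)) := by
    refine tendsto_nhdsWithin_of_tendsto_nhds_of_eventually_within _ ?_ ?_
    · have : Tendsto (fun n : ℕ => 1 / ((n:ℝ) + 1)) atTop (𝓝 0) :=
        tendsto_one_div_add_atTop_nhds_zero_nat
      simpa using (tendsto_const_nhds.add this)
    · refine Eventually.of_forall fun n => ?_
      simp only [Set.mem_compl_iff, Set.mem_singleton_iff]
      have : (0:ℝ) < 1 / ((n:ℝ) + 1) := by positivity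
      intro h
      nlinarith [h]
  have := hslope.comp hu
  refine Tendsto.congr ?_ this
  intro n
  have hne : (1 : ℝ) / ((n:ℝ) + 1) ≠ 0 := by positivity
  simp only [Function.comp_apply, slope_def_field, hF]
  rw [add_sub_cancel_left]
  field_simp

lemma iteratedDeriv_le_WNorm {k j : ℕ} {f : ℝ → ℝ} (hf : MemW k f) (hj : j ≤ k) (x : ℝ) :
    |iteratedDeriv j f x| ≤ WNorm k f := by
  have hbdd : ∀ i ≤ k, BddAbove (Set.range fun x => |iteratedDeriv i f x|) := by
    intro i hi
    obtain ⟨C, hC⟩ := hf.2 i hi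
    exact ⟨C, fun y hy => by obtain ⟨z, rfl⟩ := hy; exact hC z⟩
  have h1 : |iteratedDeriv j f x| ≤ ⨆ y : ℝ, |iteratedDeriv j f y| :=
    le_ciSup (hbdd j hj) x
  refine h1.trans ?_
  refine Finset.single_le_sum (f := fun i => ⨆ y : ℝ, |iteratedDeriv i f y|) ?_ ?_
  · intro i hi
    have : |iteratedDeriv i f 0| ≤ ⨆ y : ℝ, |iteratedDeriv i f y| :=
      le_ciSup (hbdd i (Nat.lt_succ_iff.1 (Finset.mem_range.1 hi))) 0
    exact le_trans (abs_nonneg _) this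
  · exact Finset.mem_range.2 (Nat.lt_succ_iff.2 hj)

lemma memW_two_diff {f : ℝ → ℝ} (hf : MemW 2 f) : Differentiable ℝ f :=
  hf.1.differentiable (by norm_num)

lemma memW_two_deriv_contDiff {f : ℝ → ℝ} (hf : MemW 2 f) : ContDiff ℝ 1 (deriv f) := by
  have h : ContDiff ℝ ((1 : ℕ) + 1) f := by exact_mod_cast hf.1
  exact (contDiff_succ_iff_deriv.1 h).2.2

lemma memW_two_deriv_diff {f : ℝ → ℝ} (hf : MemW 2 f) : Differentiable ℝ (deriv f) :=
  (memW_two_deriv_contDiff hf).differentiable one_ne_zero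

lemma memW_two_deriv_cont {f : ℝ → ℝ} (hf : MemW 2 f) : Continuous (deriv f) :=
  (memW_two_deriv_contDiff hf).continuous

lemma abs_deriv_le_WNorm {f : ℝ → ℝ} (hf : MemW 2 f) (x : ℝ) : |deriv f x| ≤ WNorm 2 f := by
  have := iteratedDeriv_le_WNorm hf (by norm_num : 1 ≤ 2) x
  rwa [iteratedDeriv_one] at this

lemma abs_deriv2_le_WNorm {f : ℝ → ℝ} (hf : MemW 2 f) (x : ℝ) :
    |deriv (deriv f) x| ≤ WNorm 2 f := by
  have := iteratedDeriv_le_WNorm hf le_rfl x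
  rwa [iteratedDeriv_succ, iteratedDeriv_one] at this

/-- Lipschitz estimate from a bound on the derivative. -/
lemma lip_of_deriv_bound {f : ℝ → ℝ} (hf : Differentiable ℝ f) {B : ℝ}
    (hB : ∀ x, |deriv f x| ≤ B) (a b : ℝ) : |f a - f b| ≤ B * |a - b| := by
  have := Convex.norm_image_sub_le_of_norm_deriv_le (f := f) (s := Set.univ)
    (fun x _ => hf x) (fun x _ => by simpa [Real.norm_eq_abs] using hB x)
    convex_univ (Set.mem_univ b) (Set.mem_univ a)
  simpa [Real.norm_eq_abs] using this

/-- deriv f is Lipschitz with constant `WNorm 2 f`. -/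
lemma deriv_lip {f : ℝ → ℝ} (hf : MemW 2 f) (a b : ℝ) :
    |deriv f a - deriv f b| ≤ WNorm 2 f * |a - b| :=
  lip_of_deriv_bound (memW_two_deriv_diff hf) (abs_deriv2_le_WNorm hf) a b

/-- Grönwall: continuous nonneg function dominated by `K` times its integral vanishes. -/
lemma gronwall_zero {φ : ℝ → ℝ} {T K : ℝ} (hφc : Continuous φ)
    (hφ0 : ∀ u, 0 ≤ φ u) (hK : 0 ≤ K)
    (h : ∀ u ∈ Set.Icc (0:ℝ) T, φ u ≤ K * ∫ τ in (0:ℝ)..u, φ τ) :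
    ∀ u ∈ Set.Icc (0:ℝ) T, φ u = 0 := by
  set F : ℝ → ℝ := fun u => ∫ τ in (0:ℝ)..u, φ τ with hFdef
  have hFderiv : ∀ u : ℝ, HasDerivAt F (φ u) u := fun u =>
    intervalIntegral.integral_hasDerivAt_right (hφc.intervalIntegrable _ _)
      (hφc.stronglyMeasurable.stronglyMeasurableAtFilter) hφc.continuousAt
  have hFnonneg : ∀ u ∈ Set.Icc (0:ℝ) T, 0 ≤ F u := fun u hu =>
    intervalIntegral.integral_nonneg hu.1 (fun τ _ => hφ0 τ)
  have key : ∀ u ∈ Set.Icc (0:ℝ) T, ‖F u‖ ≤ gronwallBound 0 K 0 (u - 0) := by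
    refine norm_le_gronwallBound_of_norm_deriv_right_le (f' := φ) ?_ ?_ ?_ ?_
    · exact (fun u _ => ((hFderiv u).continuousAt.continuousWithinAt))
    · exact fun u _ => (hFderiv u).hasDerivWithinAt
    · simp [hFdef]
    · intro u hu
      rw [Real.norm_eq_abs, Real.norm_eq_abs, abs_of_nonneg (hφ0 u),
        abs_of_nonneg (hFnonneg u ⟨hu.1, hu.2.le⟩), add_zero]
      exact h u ⟨hu.1, hu.2.le⟩
  intro u hu
  have hF0 : F u = 0 := by
    have := key u hu
    rw [gronwallBound_ε0_δ0] at this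
    have h2 := abs_nonneg (F u)
    rw [Real.norm_eq_abs] at this
    have : |F u| = 0 := le_antisymm this h2
    exact abs_eq_zero.1 this
  have h2 := h u hu
  have h3 : φ u ≤ 0 := by
    have : K * F u = 0 := by rw [hF0, mul_zero]
    calc φ u ≤ K * F u := h2
      _ = 0 := this
  exact le_antisymm h3 (hφ0 u)

lemma abs_le_WNorm {f : ℝ → ℝ} (hf : MemW 2 f) (x : ℝ) : |f x| ≤ WNorm 2 f := by
  simpa [iteratedDeriv_zero] using iteratedDeriv_le_WNorm hf (Nat.zero_le 2) x

lemma WNorm_nonneg {f : ℝ → ℝ} (hf : MemW 2 f) : 0 ≤ WNorm 2 f :=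
  le_trans (abs_nonneg _) (abs_le_WNorm hf 0)

/-- The spatial derivative of a mild solution. -/
lemma deriv_formula {g s₀ : ℝ → ℝ} (hg : MemW 2 g) (hs₀ : MemW 2 s₀)
    {xc : ℝ → ℝ} (hxc : ContinuousOn xc (Set.Ici 0)) {s : ℝ → ℝ → ℝ} {t : ℝ} (ht : 0 < t)
    (hmild : ∀ x, s t x = Real.exp (-t) * heatConv t s₀ x +
      ∫ τ in (0:ℝ)..t, Real.exp (-(t - τ)) * heatConv (t - τ) g (x - xc τ)) (x : ℝ) :
    deriv (s t) x = Real.exp (-t) * heatConv t (deriv s₀) x +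
      ∫ τ in (0:ℝ)..t, Real.exp (-(t - τ)) * heatConv (t - τ) (deriv g) (x - xc τ) := by
  have hgc : Continuous g := hg.1.continuous
  have hg'c : Continuous (deriv g) := memW_two_deriv_cont hg
  have hgd : ∀ y, HasDerivAt g (deriv g y) y := fun y => (memW_two_diff hg y).hasDerivAt
  have hs₀c : Continuous s₀ := hs₀.1.continuous
  have hs₀'c : Continuous (deriv s₀) := memW_two_deriv_cont hs₀
  have hs₀d : ∀ y, HasDerivAt s₀ (deriv s₀ y) y := fun y => (memW_two_diff hs₀ y).hasDerivAt
  have hD := duhamel_hasDerivAt ht hgc hg'c hgd (abs_le_WNorm hg) (abs_deriv_le_WNorm hg) hxc x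
  have hH := (heatConv_hasDerivAt ht hs₀c hs₀'c hs₀d (abs_le_WNorm hs₀)
    (abs_deriv_le_WNorm hs₀) x).const_mul (Real.exp (-t))
  have hsum := hH.add hD
  have : HasDerivAt (s t) (Real.exp (-t) * heatConv t (deriv s₀) x +
      ∫ τ in (0:ℝ)..t, Real.exp (-(t - τ)) * heatConv (t - τ) (deriv g) (x - xc τ)) x :=
    hsum.congr_of_eventuallyEq (Eventually.of_forall hmild)
  exact this.deriv

lemma duhamel_intervalIntegrable {t : ℝ} (ht : 0 < t) {f : ℝ → ℝ} (hfc : Continuous f)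
    {C : ℝ} (hC : ∀ x, |f x| ≤ C) {xc : ℝ → ℝ} (hxc : ContinuousOn xc (Set.Ici 0)) (x : ℝ) :
    IntervalIntegrable (fun τ => Real.exp (-(t - τ)) * heatConv (t - τ) f (x - xc τ)) volume 0 t := by
  have hCnn : 0 ≤ C := le_trans (abs_nonneg _) (hC 0)
  refine intervalIntegrable_of_bdd (aesm_of_contOn_Ico ht (integrand_contOn ht hfc hC hxc x))
    (C := C) fun τ hτ => ?_
  rw [Set.uIoc_of_le ht.le] at hτ
  rcases eq_or_lt_of_le hτ.2 with h | h
  · rw [h]; simp [heatConv_zero, hCnn]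
  · have h1 : (0:ℝ) < t - τ := by linarith
    rw [abs_mul, Real.abs_exp]
    calc Real.exp (-(t - τ)) * |heatConv (t - τ) f (x - xc τ)| ≤ 1 * C := by
          refine mul_le_mul ?_ (heatConv_abs_le h1 hfc hC _) (abs_nonneg _) zero_le_one
          exact Real.exp_le_one_iff.2 (by linarith)
      _ = C := one_mul _


/-- uniqueness of mild solutions of the rescaled model. Two pairs
`(sᵢ, x_{c,i})`, continuous, with `sup_t ‖sᵢ(t,·)‖_{W^{2,∞}} ≤ M₂`, both satisfying
the mild (Duhamel) integral equations with the same data `(s₀, x₀)`, coincide. -/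
theorem mild_solution_unique
    (η : ℝ) (hη : 0 < η)
    (g : ℝ → ℝ) (hg : MemW 2 g)
    (s₀ : ℝ → ℝ) (hs₀ : MemW 2 s₀)
    (x₀ : ℝ) (M₂ : ℝ) (hM₂ : 0 < M₂)
    (s₁ s₂ : ℝ → ℝ → ℝ) (xc₁ xc₂ : ℝ → ℝ)
    (hs₁cont : ContinuousOn (fun p : ℝ × ℝ => s₁ p.1 p.2) (Set.Ici 0 ×ˢ Set.univ))
    (hs₂cont : ContinuousOn (fun p : ℝ × ℝ => s₂ p.1 p.2) (Set.Ici 0 ×ˢ Set.univ))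
    (hxc₁cont : ContinuousOn xc₁ (Set.Ici 0))
    (hxc₂cont : ContinuousOn xc₂ (Set.Ici 0))
    (hb₁ : ∀ t ≥ (0 : ℝ), MemW 2 (s₁ t) ∧ WNorm 2 (s₁ t) ≤ M₂)
    (hb₂ : ∀ t ≥ (0 : ℝ), MemW 2 (s₂ t) ∧ WNorm 2 (s₂ t) ≤ M₂)
    (hxc₁ : ∀ t ≥ (0 : ℝ), xc₁ t = x₀ - η * ∫ τ in (0 : ℝ)..t, deriv (s₁ τ) (xc₁ τ))
    (hxc₂ : ∀ t ≥ (0 : ℝ), xc₂ t = x₀ - η * ∫ τ in (0 : ℝ)..t, deriv (s₂ τ) (xc₂ τ))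
    (hini₁ : ∀ x, s₁ 0 x = s₀ x) (hini₂ : ∀ x, s₂ 0 x = s₀ x)
    (hmild₁ : ∀ t > (0 : ℝ), ∀ x : ℝ,
      s₁ t x = Real.exp (-t) * heatConv t s₀ x +
        ∫ τ in (0 : ℝ)..t, Real.exp (-(t - τ)) * heatConv (t - τ) g (x - xc₁ τ))
    (hmild₂ : ∀ t > (0 : ℝ), ∀ x : ℝ,
      s₂ t x = Real.exp (-t) * heatConv t s₀ x +
        ∫ τ in (0 : ℝ)..t, Real.exp (-(t - τ)) * heatConv (t - τ) g (x - xc₂ τ)) :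
    (∀ t ≥ (0 : ℝ), ∀ x : ℝ, s₁ t x = s₂ t x) ∧ (∀ t ≥ (0 : ℝ), xc₁ t = xc₂ t) := by
  classical
  have hgc : Continuous g := hg.1.continuous
  have hg'c : Continuous (deriv g) := memW_two_deriv_cont hg
  set Cg : ℝ := WNorm 2 g with hCgdef
  have hCgnn : 0 ≤ Cg := WNorm_nonneg hg
  -- continuous extension of the center difference
  set δ : ℝ → ℝ := fun τ => |xc₁ (max τ 0) - xc₂ (max τ 0)| with hδdef
  have hmax : Continuous (fun τ : ℝ => max τ 0) := continuous_id.max continuous_const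
  have hmem : ∀ τ : ℝ, max τ 0 ∈ Set.Ici (0:ℝ) := fun τ => Set.mem_Ici.2 (le_max_right _ _)
  have hδc : Continuous δ := ((hxc₁cont.comp_continuous hmax hmem).sub
      (hxc₂cont.comp_continuous hmax hmem)).abs
  have hδeq : ∀ τ ≥ (0:ℝ), δ τ = |xc₁ τ - xc₂ τ| := fun τ hτ => by
    simp only [hδdef, max_eq_left hτ]
  have hδnn : ∀ τ, 0 ≤ δ τ := fun τ => abs_nonneg _
  have hδprim : ∀ u : ℝ, HasDerivAt (fun u => ∫ σ in (0:ℝ)..u, δ σ) (δ u) u := fun u =>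
    intervalIntegral.integral_hasDerivAt_right (hδc.intervalIntegrable _ _)
      (hδc.stronglyMeasurable.stronglyMeasurableAtFilter) hδc.continuousAt
  have hδprimc : Continuous (fun u : ℝ => ∫ σ in (0:ℝ)..u, δ σ) :=
    continuous_iff_continuousAt.2 fun u => (hδprim u).continuousAt
  -- initial values of the centers
  have hxc₁0 : xc₁ 0 = x₀ := by simpa using hxc₁ 0 le_rfl
  have hxc₂0 : xc₂ 0 = x₀ := by simpa using hxc₂ 0 le_rfl
  -- Step 2: bound on the difference of spatial derivatives
  have step2 : ∀ t > (0:ℝ), ∀ x : ℝ,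
      |deriv (s₁ t) x - deriv (s₂ t) x| ≤ Cg * ∫ σ in (0:ℝ)..t, δ σ := by
    intro t ht x
    have h1 := deriv_formula hg hs₀ hxc₁cont ht (hmild₁ t ht) x
    have h2 := deriv_formula hg hs₀ hxc₂cont ht (hmild₂ t ht) x
    set f₁ : ℝ → ℝ := fun τ => Real.exp (-(t - τ)) * heatConv (t - τ) (deriv g) (x - xc₁ τ)
      with hf₁def
    set f₂ : ℝ → ℝ := fun τ => Real.exp (-(t - τ)) * heatConv (t - τ) (deriv g) (x - xc₂ τ)
      with hf₂def
    have hint₁ : IntervalIntegrable f₁ volume 0 t :=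
      duhamel_intervalIntegrable ht hg'c (abs_deriv_le_WNorm hg) hxc₁cont x
    have hint₂ : IntervalIntegrable f₂ volume 0 t :=
      duhamel_intervalIntegrable ht hg'c (abs_deriv_le_WNorm hg) hxc₂cont x
    have hdiff_eq : deriv (s₁ t) x - deriv (s₂ t) x = ∫ τ in (0:ℝ)..t, (f₁ τ - f₂ τ) := by
      rw [h1, h2, intervalIntegral.integral_sub hint₁ hint₂]; ring
    rw [hdiff_eq]
    have hptwise : ∀ τ ∈ Set.Icc (0:ℝ) t, |f₁ τ - f₂ τ| ≤ Cg * δ τ := by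
      intro τ hτ
      rcases eq_or_lt_of_le hτ.2 with h | h
      · rw [hf₁def, hf₂def]
        simp only [h, sub_self, heatConv_zero, mul_zero, sub_zero, abs_zero]
        exact mul_nonneg hCgnn (hδnn _)
      · have h1' : (0:ℝ) < t - τ := by linarith
        have hlip := heatConv_lip h1' hg'c (abs_deriv_le_WNorm hg) (deriv_lip hg)
          (x - xc₁ τ) (x - xc₂ τ)
        calc |f₁ τ - f₂ τ| = Real.exp (-(t - τ)) *
              |heatConv (t - τ) (deriv g) (x - xc₁ τ) - heatConv (t - τ) (deriv g) (x - xc₂ τ)| := by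
              rw [hf₁def, hf₂def, ← mul_sub, abs_mul, Real.abs_exp]
          _ ≤ 1 * (Cg * |(x - xc₁ τ) - (x - xc₂ τ)|) := by
              refine mul_le_mul ?_ hlip (abs_nonneg _) zero_le_one
              exact Real.exp_le_one_iff.2 (by linarith)
          _ = Cg * δ τ := by
              rw [one_mul, hδeq τ hτ.1]
              congr 1
              rw [show (x - xc₁ τ) - (x - xc₂ τ) = -(xc₁ τ - xc₂ τ) by ring, abs_neg]
    calc |∫ τ in (0:ℝ)..t, (f₁ τ - f₂ τ)| ≤ ∫ τ in (0:ℝ)..t, |f₁ τ - f₂ τ| :=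
          intervalIntegral.abs_integral_le_integral_abs ht.le
      _ ≤ ∫ τ in (0:ℝ)..t, Cg * δ τ := by
          refine intervalIntegral.integral_mono_on ht.le ((hint₁.sub hint₂).abs)
            ((continuous_const.mul hδc).intervalIntegrable _ _) hptwise
      _ = Cg * ∫ σ in (0:ℝ)..t, δ σ := by rw [intervalIntegral.integral_const_mul]
  -- Step 3 + Grönwall: the centers coincide
  have hxceq : ∀ t ≥ (0:ℝ), xc₁ t = xc₂ t := by
    intro T hT0
    rcases eq_or_lt_of_le hT0 with h | hT
    · rw [← h, hxc₁0, hxc₂0]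
    set K : ℝ := η * (M₂ + Cg * T) with hKdef
    have hKnn : 0 ≤ K := by positivity
    have key : ∀ u ∈ Set.Icc (0:ℝ) T, δ u ≤ K * ∫ σ in (0:ℝ)..u, δ σ := by
      intro u hu
      rcases eq_or_lt_of_le hu.1 with h0 | h0
      · rw [← h0]
        have : δ 0 = 0 := by rw [hδeq 0 le_rfl, hxc₁0, hxc₂0, sub_self, abs_zero]
        rw [this]
        simp
      -- u > 0
      set A₁ : ℝ → ℝ := fun τ => deriv (s₁ τ) (xc₁ τ) with hA₁def
      set A₂ : ℝ → ℝ := fun τ => deriv (s₂ τ) (xc₂ τ) with hA₂def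
      have hτpos : ∀ τ ∈ Set.uIoc (0:ℝ) u, 0 ≤ τ := by
        intro τ hτ
        rw [Set.uIoc_of_le h0.le] at hτ
        exact hτ.1.le
      have hA₁i : IntervalIntegrable A₁ volume 0 u := by
        refine intervalIntegrable_of_bdd
          (aesm_deriv_moving hs₁cont (fun τ hτ => memW_two_diff (hb₁ τ hτ).1) hxc₁cont h0)
          (C := M₂) fun τ hτ => ?_
        exact (abs_deriv_le_WNorm (hb₁ τ (hτpos τ hτ)).1 _).trans (hb₁ τ (hτpos τ hτ)).2
      have hA₂i : IntervalIntegrable A₂ volume 0 u := by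
        refine intervalIntegrable_of_bdd
          (aesm_deriv_moving hs₂cont (fun τ hτ => memW_two_diff (hb₂ τ hτ).1) hxc₂cont h0)
          (C := M₂) fun τ hτ => ?_
        exact (abs_deriv_le_WNorm (hb₂ τ (hτpos τ hτ)).1 _).trans (hb₂ τ (hτpos τ hτ)).2
      set ψ : ℝ → ℝ := fun τ => M₂ * δ τ + Cg * ∫ σ in (0:ℝ)..τ, δ σ with hψdef
      have hψc : Continuous ψ := (continuous_const.mul hδc).add (continuous_const.mul hδprimc)
      have hsub : xc₁ u - xc₂ u = η * ((∫ τ in (0:ℝ)..u, A₂ τ) - ∫ τ in (0:ℝ)..u, A₁ τ) := by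
        rw [hxc₁ u hu.1, hxc₂ u hu.1]; ring
      have hptA : ∀ τ ∈ Set.Icc (0:ℝ) u, |A₂ τ - A₁ τ| ≤ ψ τ := by
        intro τ hτ
        rcases eq_or_lt_of_le hτ.1 with h0' | h0'
        · have e1 : A₁ 0 = deriv s₀ x₀ := by
            rw [hA₁def]
            have : s₁ 0 = s₀ := funext hini₁
            simp only [this, hxc₁0]
          have e2 : A₂ 0 = deriv s₀ x₀ := by
            rw [hA₂def]
            have : s₂ 0 = s₀ := funext hini₂
            simp only [this, hxc₂0]
          rw [← h0', e1, e2, sub_self, abs_zero, hψdef]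
          have h3 : 0 ≤ ∫ σ in (0:ℝ)..(0:ℝ), δ σ := by simp
          have h4 := hδnn 0
          positivity
        · -- τ > 0
          have hδτ := hδeq τ hτ.1
          have hlip1 : |deriv (s₁ τ) (xc₂ τ) - deriv (s₁ τ) (xc₁ τ)| ≤ M₂ * δ τ := by
            calc |deriv (s₁ τ) (xc₂ τ) - deriv (s₁ τ) (xc₁ τ)|
                ≤ WNorm 2 (s₁ τ) * |xc₂ τ - xc₁ τ| := deriv_lip (hb₁ τ hτ.1).1 _ _
              _ ≤ M₂ * δ τ := by
                  rw [hδτ, abs_sub_comm]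
                  exact mul_le_mul_of_nonneg_right (hb₁ τ hτ.1).2 (abs_nonneg _)
          have hstep := step2 τ h0' (xc₂ τ)
          calc |A₂ τ - A₁ τ| = |deriv (s₂ τ) (xc₂ τ) - deriv (s₁ τ) (xc₁ τ)| := rfl
            _ ≤ |deriv (s₂ τ) (xc₂ τ) - deriv (s₁ τ) (xc₂ τ)| +
                |deriv (s₁ τ) (xc₂ τ) - deriv (s₁ τ) (xc₁ τ)| := abs_sub_le _ _ _
            _ ≤ (Cg * ∫ σ in (0:ℝ)..τ, δ σ) + M₂ * δ τ := by
                refine add_le_add ?_ hlip1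
                rw [abs_sub_comm]
                exact hstep
            _ = ψ τ := by rw [hψdef]; ring
      have hI : δ u ≤ η * ∫ τ in (0:ℝ)..u, ψ τ := by
        rw [hδeq u hu.1, hsub, abs_mul, abs_of_pos hη]
        refine mul_le_mul_of_nonneg_left ?_ hη.le
        calc |(∫ τ in (0:ℝ)..u, A₂ τ) - ∫ τ in (0:ℝ)..u, A₁ τ|
            = |∫ τ in (0:ℝ)..u, (A₂ τ - A₁ τ)| := by
              rw [intervalIntegral.integral_sub hA₂i hA₁i]
          _ ≤ ∫ τ in (0:ℝ)..u, |A₂ τ - A₁ τ| :=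
              intervalIntegral.abs_integral_le_integral_abs h0.le
          _ ≤ ∫ τ in (0:ℝ)..u, ψ τ :=
              intervalIntegral.integral_mono_on h0.le ((hA₂i.sub hA₁i).abs)
                (hψc.intervalIntegrable _ _) hptA
      -- bound the ψ integral
      have hinner : ∀ τ ∈ Set.Icc (0:ℝ) u, (∫ σ in (0:ℝ)..τ, δ σ) ≤ ∫ σ in (0:ℝ)..u, δ σ := by
        intro τ hτ
        have hadd := intervalIntegral.integral_add_adjacent_intervals (μ := volume) (f := δ)
          (hδc.intervalIntegrable 0 τ) (hδc.intervalIntegrable τ u)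
        have hpos : 0 ≤ ∫ σ in τ..u, δ σ :=
          intervalIntegral.integral_nonneg hτ.2 (fun σ _ => hδnn σ)
        linarith [hadd]
      have hIψ : (∫ τ in (0:ℝ)..u, ψ τ) ≤ (M₂ + Cg * T) * ∫ σ in (0:ℝ)..u, δ σ := by
        have hIδnn : 0 ≤ ∫ σ in (0:ℝ)..u, δ σ :=
          intervalIntegral.integral_nonneg h0.le (fun σ _ => hδnn σ)
        have h5 : (∫ τ in (0:ℝ)..u, ψ τ)
            = M₂ * (∫ σ in (0:ℝ)..u, δ σ) + Cg * ∫ τ in (0:ℝ)..u, (∫ σ in (0:ℝ)..τ, δ σ) := by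
          rw [hψdef]
          rw [intervalIntegral.integral_add (f := fun τ => M₂ * δ τ) (g := fun τ => Cg * ∫ σ in (0:ℝ)..τ, δ σ)
            ((continuous_const.mul hδc).intervalIntegrable _ _)
            ((continuous_const.mul hδprimc).intervalIntegrable _ _),
            intervalIntegral.integral_const_mul, intervalIntegral.integral_const_mul]
        have h6 : (∫ τ in (0:ℝ)..u, (∫ σ in (0:ℝ)..τ, δ σ)) ≤ u * ∫ σ in (0:ℝ)..u, δ σ := by
          calc (∫ τ in (0:ℝ)..u, (∫ σ in (0:ℝ)..τ, δ σ))
              ≤ ∫ _ in (0:ℝ)..u, (∫ σ in (0:ℝ)..u, δ σ) :=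
                intervalIntegral.integral_mono_on h0.le (hδprimc.intervalIntegrable _ _)
                  (intervalIntegrable_const) hinner
            _ = u * ∫ σ in (0:ℝ)..u, δ σ := by
                rw [intervalIntegral.integral_const, smul_eq_mul, sub_zero]
        have h7 : Cg * (∫ τ in (0:ℝ)..u, (∫ σ in (0:ℝ)..τ, δ σ)) ≤ Cg * (T * ∫ σ in (0:ℝ)..u, δ σ) := by
          refine mul_le_mul_of_nonneg_left (h6.trans ?_) hCgnn
          exact mul_le_mul_of_nonneg_right hu.2 hIδnn
        rw [h5]; nlinarith
      calc δ u ≤ η * ∫ τ in (0:ℝ)..u, ψ τ := hI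
        _ ≤ η * ((M₂ + Cg * T) * ∫ σ in (0:ℝ)..u, δ σ) :=
            mul_le_mul_of_nonneg_left hIψ hη.le
        _ = K * ∫ σ in (0:ℝ)..u, δ σ := by rw [hKdef]; ring
    have hzero := gronwall_zero hδc hδnn hKnn key
    have := hzero T ⟨hT0, le_rfl⟩
    rw [hδeq T hT0] at this
    exact sub_eq_zero.1 (abs_eq_zero.1 this)
  refine ⟨?_, hxceq⟩
  intro t ht0 x
  rcases eq_or_lt_of_le ht0 with h | ht
  · rw [← h, hini₁, hini₂]
  rw [hmild₁ t ht x, hmild₂ t ht x]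
  congr 1
  refine intervalIntegral.integral_congr fun τ hτ => ?_
  rw [Set.uIcc_of_le ht.le] at hτ
  rw [hxceq τ hτ.1]


end
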